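/- Let f : ℝ^d → ℝ be β-smooth and μ-strongly convex with minimizer w* and f* = f(w*), and let {w_r^k} for k = 1,…,K be generated by partial-synchronization local SGD with stepsizes η_r ≤ 1/(4β). Define w̄_r = (1/K) Σ_{k=1}^K w_r^k, g_r = (1/K) Σ_{k=1}^K ∇f(w_r^k; ξ_r^k), and ḡ_r = (1/K) Σ_{k=1}^K ∇f(w_r^k). Then for every iteration r, E‖w̄_{r+1} − w*‖² ≤ (1 − μ η_r) E‖w̄_r − w*‖² + η_r² E‖g_r − ḡ_r‖² − (1/2) η_r E(f(w̄_r) − f*) + 2 η_r (β/K) Σ_{k=1}^K E‖w̄_r − w_r^k‖². -/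

import Mathlib

open MeasureTheory ProbabilityTheory
open scoped RealInnerProductSpace

noncomputable section

set_option maxHeartbeats 1600000

open Filter
open scoped Topology

namespace LocalSGDAux

variable {d : ℕ}

local notation "E" => EuclideanSpace ℝ (Fin d)

lemma gauss_sum (n : ℕ) : ∑ i ∈ Finset.range n, ((i : ℝ) + 1) = n * (n + 1) / 2 := by
  induction n with
  | zero => simp
  | succ n ih => rw [Finset.sum_range_succ, ih]; push_cast; ring

lemma lip_grad {f : E → ℝ} {β : ℝ} (hβ : 0 < β)
    (hsmooth : LipschitzWith β.toNNReal (fun x => gradient f x)) (a b : E) :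
    ‖gradient f a - gradient f b‖ ≤ β * ‖a - b‖ := by
  have := hsmooth.dist_le_mul a b
  rwa [dist_eq_norm, dist_eq_norm, Real.coe_toNNReal β hβ.le] at this
lemma descent {f : E → ℝ} {β μ : ℝ} (hβ : 0 < β) (hμ : 0 ≤ μ)
    (hsmooth : LipschitzWith β.toNNReal (fun x => gradient f x))
    (hstrong : ∀ x y, f x + ⟪gradient f x, y - x⟫ + μ / 2 * ‖y - x‖ ^ 2 ≤ f y)
    (x y : E) :
    f y ≤ f x + ⟪gradient f x, y - x⟫ + β / 2 * ‖y - x‖ ^ 2 := by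
  set c := ⟪gradient f x, y - x⟫ with hc
  have key : ∀ n : ℕ, 1 ≤ n →
      f y - f x - c ≤ β * ‖y - x‖ ^ 2 * (((n : ℝ) + 1) / (2 * n)) := by
    intro n hn
    have hn0 : (0 : ℝ) < n := by exact_mod_cast hn
    set p : ℕ → E := fun i => x + ((i : ℝ) / n) • (y - x) with hp
    have hp0 : p 0 = x := by simp [hp]
    have hpn : p n = y := by simp [hp, div_self hn0.ne']
    have hstep : ∀ i : ℕ, p (i + 1) - p i = ((1 : ℝ) / n) • (y - x) := by
      intro i
      simp only [hp]
      rw [add_sub_add_left_eq_sub, ← sub_smul]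
      congr 1
      push_cast
      field_simp
      ring
    have hdev : ∀ i : ℕ, p (i + 1) - x = (((i : ℝ) + 1) / n) • (y - x) := by
      intro i
      simp only [hp]
      push_cast
      exact add_sub_cancel_left x _
    have tele : f y - f x = ∑ i ∈ Finset.range n, (f (p (i + 1)) - f (p i)) := by
      rw [Finset.sum_range_sub (fun i => f (p i)), hp0, hpn]
    have bound : ∀ i ∈ Finset.range n,
        f (p (i + 1)) - f (p i) ≤ (1 / n) * c + β * (((i : ℝ) + 1) / n ^ 2) * ‖y - x‖ ^ 2 := by
      intro i _
      have h1 : f (p (i + 1)) - f (p i) ≤ ⟪gradient f (p (i + 1)), p (i + 1) - p i⟫ := by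
        have h := hstrong (p (i + 1)) (p i)
        have hμ' : 0 ≤ μ / 2 * ‖p i - p (i + 1)‖ ^ 2 := by positivity
        have e : ⟪gradient f (p (i+1)), p i - p (i+1)⟫
            = - ⟪gradient f (p (i+1)), p (i+1) - p i⟫ := by
          rw [← inner_neg_right]; congr 1; abel
        linarith
      have h2 : ⟪gradient f (p (i + 1)), p (i + 1) - p i⟫
          = (1 / n) * c + ⟪gradient f (p (i + 1)) - gradient f x, ((1:ℝ)/n) • (y - x)⟫ := by
        rw [hstep i]
        have e : ((1:ℝ) / n) * c = ⟪gradient f x, ((1:ℝ)/n) • (y - x)⟫ := by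
          rw [hc, real_inner_smul_right]
        rw [e, ← inner_add_left]
        congr 1
        abel
      have h3 : ⟪gradient f (p (i + 1)) - gradient f x, ((1:ℝ)/n) • (y - x)⟫
          ≤ β * (((i : ℝ) + 1) / n ^ 2) * ‖y - x‖ ^ 2 := by
        refine le_trans (real_inner_le_norm _ _) ?_
        have hl : ‖gradient f (p (i + 1)) - gradient f x‖
            ≤ β * ((((i : ℝ) + 1) / n) * ‖y - x‖) := by
          refine le_trans (lip_grad hβ hsmooth _ _) ?_
          rw [hdev i, norm_smul, Real.norm_eq_abs, abs_of_nonneg (by positivity)]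
        have hr : ‖((1:ℝ)/n) • (y - x)‖ = (1 / n) * ‖y - x‖ := by
          rw [norm_smul, Real.norm_eq_abs, abs_of_nonneg (by positivity)]
        calc ‖gradient f (p (i + 1)) - gradient f x‖ * ‖((1:ℝ)/n) • (y - x)‖
            ≤ (β * ((((i : ℝ) + 1) / n) * ‖y - x‖)) * ((1 / n) * ‖y - x‖) := by
              rw [hr]
              exact mul_le_mul_of_nonneg_right hl (by positivity)
          _ = β * (((i : ℝ) + 1) / n ^ 2) * ‖y - x‖ ^ 2 := by ring
      linarith
    have e1 : ∑ _i ∈ Finset.range n, (1 / (n:ℝ)) * c = c := by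
      rw [Finset.sum_const, Finset.card_range, nsmul_eq_mul]
      field_simp
    have e2 : ∑ i ∈ Finset.range n, β * (((i : ℝ) + 1) / n ^ 2) * ‖y - x‖ ^ 2
        = β * ‖y - x‖ ^ 2 * (((n : ℝ) + 1) / (2 * n)) := by
      have : ∀ i ∈ Finset.range n, β * (((i : ℝ) + 1) / n ^ 2) * ‖y - x‖ ^ 2
          = (β * ‖y - x‖ ^ 2 / n ^ 2) * ((i : ℝ) + 1) := by intro i _; ring
      rw [Finset.sum_congr rfl this, ← Finset.mul_sum, gauss_sum]
      field_simp
    have sumbound := Finset.sum_le_sum bound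
    rw [← tele, Finset.sum_add_distrib, e1, e2] at sumbound
    linarith
  have lim : Tendsto (fun n : ℕ => β * ‖y - x‖ ^ 2 * (((n : ℝ) + 1) / (2 * n))) atTop
      (𝓝 (β / 2 * ‖y - x‖ ^ 2)) := by
    have t0 : Tendsto (fun n : ℕ => 1 / (n : ℝ)) atTop (𝓝 0) :=
      tendsto_one_div_atTop_nhds_zero_nat
    have t1 : Tendsto (fun n : ℕ => β * ‖y - x‖ ^ 2 * (1 / 2 + 1 / 2 * (1 / (n : ℝ)))) atTop
        (𝓝 (β * ‖y - x‖ ^ 2 * (1 / 2 + 1 / 2 * 0))) :=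
      (((t0.const_mul (1/2:ℝ)).const_add (1/2:ℝ)).const_mul _)
    have : β * ‖y - x‖ ^ 2 * (1 / 2 + 1 / 2 * 0) = β / 2 * ‖y - x‖ ^ 2 := by ring
    rw [this] at t1
    refine Tendsto.congr' ?_ t1
    filter_upwards [eventually_ge_atTop 1] with n hn
    have hn0 : (0 : ℝ) < n := by exact_mod_cast hn
    field_simp
    try ring
  have final : f y - f x - c ≤ β / 2 * ‖y - x‖ ^ 2 := by
    refine ge_of_tendsto lim ?_
    filter_upwards [eventually_ge_atTop 1] with n hn using key n hn
  linarith

lemma grad_sq_le {f : E → ℝ} {β μ : ℝ} (hβ : 0 < β) (hμ : 0 ≤ μ)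
    (hsmooth : LipschitzWith β.toNNReal (fun x => gradient f x))
    (hstrong : ∀ x y, f x + ⟪gradient f x, y - x⟫ + μ / 2 * ‖y - x‖ ^ 2 ≤ f y)
    (wstar : E) (hmin : ∀ w, f wstar ≤ f w) (x : E) :
    ‖gradient f x‖ ^ 2 ≤ 2 * β * (f x - f wstar) := by
  have hd := descent hβ hμ hsmooth hstrong x (x - β⁻¹ • gradient f x)
  have e1 : x - β⁻¹ • gradient f x - x = -(β⁻¹ • gradient f x) := by abel
  rw [e1] at hd
  have e2 : ⟪gradient f x, -(β⁻¹ • gradient f x)⟫ = -(β⁻¹ * ‖gradient f x‖ ^ 2) := by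
    rw [inner_neg_right, real_inner_smul_right, real_inner_self_eq_norm_sq]
  have e3 : ‖-(β⁻¹ • gradient f x)‖ ^ 2 = β⁻¹ ^ 2 * ‖gradient f x‖ ^ 2 := by
    rw [norm_neg, norm_smul, Real.norm_eq_abs, abs_of_nonneg (by positivity), mul_pow]
  rw [e2, e3] at hd
  have hm := hmin (x - β⁻¹ • gradient f x)
  have e4 : β / 2 * (β⁻¹ ^ 2 * ‖gradient f x‖ ^ 2) = β⁻¹ / 2 * ‖gradient f x‖ ^ 2 := by
    field_simp
  rw [e4] at hd
  have h5 : β⁻¹ * ‖gradient f x‖ ^ 2 ≤ 2 * (f x - f wstar) := by linarith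
  have h6 : ‖gradient f x‖ ^ 2 = β * (β⁻¹ * ‖gradient f x‖ ^ 2) := by
    rw [← mul_assoc, mul_inv_cancel₀ hβ.ne', one_mul]
  rw [h6]
  calc β * (β⁻¹ * ‖gradient f x‖ ^ 2) ≤ β * (2 * (f x - f wstar)) :=
        mul_le_mul_of_nonneg_left h5 hβ.le
    _ = 2 * β * (f x - f wstar) := by ring

lemma jensen_sq {K : ℕ} (u : Fin K → E) :
    ‖∑ k, u k‖ ^ 2 ≤ (K : ℝ) * ∑ k, ‖u k‖ ^ 2 := by
  have h1 : ‖∑ k, u k‖ ≤ ∑ k, ‖u k‖ := norm_sum_le _ _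
  have h2 : (∑ k, ‖u k‖) ^ 2 ≤ (∑ k, ‖u k‖ ^ 2) * ∑ k : Fin K, (1:ℝ) ^ 2 := by
    have := Finset.sum_mul_sq_le_sq_mul_sq Finset.univ (fun k => ‖u k‖) (fun _ => (1:ℝ))
    simpa using this
  have h3 : (∑ k : Fin K, (1:ℝ) ^ 2) = (K : ℝ) := by simp
  have h4 : ‖∑ k, u k‖ ^ 2 ≤ (∑ k, ‖u k‖) ^ 2 :=
    pow_le_pow_left₀ (norm_nonneg _) h1 2
  rw [h3] at h2
  nlinarith

lemma det_step {f : E → ℝ} {β μ : ℝ} (hβ : 0 < β) (hμ : 0 < μ)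
    (hsmooth : LipschitzWith β.toNNReal (fun x => gradient f x))
    (hstrong : ∀ x y, f x + ⟪gradient f x, y - x⟫ + μ / 2 * ‖y - x‖ ^ 2 ≤ f y)
    (wstar : E) (hmin : ∀ w, f wstar ≤ f w)
    {η : ℝ} (hη : 0 < η) (hη4 : η ≤ 1 / (4 * β))
    {K : ℕ} (hK : 0 < K) (v : Fin K → E) :
    ‖(K : ℝ)⁻¹ • ∑ k, v k - wstar - η • ((K : ℝ)⁻¹ • ∑ k, gradient f (v k))‖ ^ 2
      ≤ (1 - μ * η) * ‖(K : ℝ)⁻¹ • ∑ k, v k - wstar‖ ^ 2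
        - 1 / 2 * η * (f ((K : ℝ)⁻¹ • ∑ k, v k) - f wstar)
        + 2 * η * (β / K) * ∑ k, ‖(K : ℝ)⁻¹ • ∑ j, v j - v k‖ ^ 2 := by
  have hμ' : (0:ℝ) ≤ μ := hμ.le
  have hKr : (0:ℝ) < K := by exact_mod_cast hK
  set wb : E := (K : ℝ)⁻¹ • ∑ k, v k with hwb
  set gb : E := (K : ℝ)⁻¹ • ∑ k, gradient f (v k) with hgb
  set a : ℝ := ‖wb - wstar‖ ^ 2 with ha
  set F : ℝ := f wb - f wstar with hF'
  set S : ℝ := ∑ k, ‖wb - v k‖ ^ 2 with hS'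
  set T : ℝ := (K:ℝ)⁻¹ * S with hT'
  set P : ℝ := ⟪gb, wb - wstar⟫ with hP'
  set G : ℝ := ‖gb‖ ^ 2 with hG'
  have hF : 0 ≤ F := by simp only [hF', sub_nonneg]; exact hmin wb
  have hS : 0 ≤ S := Finset.sum_nonneg fun k _ => sq_nonneg _
  have hT : 0 ≤ T := mul_nonneg (by positivity) hS
  have hKsum : (K : ℝ) • wb = ∑ k, v k := by
    rw [hwb, smul_smul, mul_inv_cancel₀ hKr.ne', one_smul]
  -- expansion
  have expand : ‖wb - wstar - η • gb‖ ^ 2 = a - 2 * η * P + η ^ 2 * G := by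
    rw [norm_sub_sq_real (wb - wstar) (η • gb)]
    rw [real_inner_smul_right, norm_smul, Real.norm_eq_abs, abs_of_nonneg hη.le,
      real_inner_comm]
    rw [ha, hP', hG']
    ring
  -- sum of deviations is zero
  have hdev0 : ∑ k, (v k - wb) = 0 := by
    rw [Finset.sum_sub_distrib, Finset.sum_const, Finset.card_univ, Fintype.card_fin,
      ← Nat.cast_smul_eq_nsmul ℝ, hKsum, sub_self]
  -- wb - wstar as average
  have hwbavg : wb - wstar = (K : ℝ)⁻¹ • ∑ k, (v k - wstar) := by
    rw [Finset.sum_sub_distrib, Finset.sum_const, Finset.card_univ, Fintype.card_fin,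
      ← Nat.cast_smul_eq_nsmul ℝ, smul_sub, smul_smul, inv_mul_cancel₀ hKr.ne', one_smul, hwb]
  -- lower bound for P
  have hP : F + μ / 2 * a - β / 2 * T ≤ P := by
    have hsum : P = (K:ℝ)⁻¹ * ∑ k, ⟪gradient f (v k), wb - wstar⟫ := by
      rw [hP', hgb, real_inner_smul_left, sum_inner]
    have hterm : ∀ k, F + μ / 2 * ‖v k - wstar‖ ^ 2 - β / 2 * ‖wb - v k‖ ^ 2
        ≤ ⟪gradient f (v k), wb - wstar⟫ := by
      intro k
      have hd := descent hβ hμ' hsmooth hstrong (v k) wb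
      have hs := hstrong (v k) wstar
      have esplit : ⟪gradient f (v k), wb - wstar⟫
          = ⟪gradient f (v k), wb - v k⟫ + ⟪gradient f (v k), v k - wstar⟫ := by
        rw [← inner_add_right]; congr 1; abel
      have eneg : ⟪gradient f (v k), wstar - v k⟫
          = - ⟪gradient f (v k), v k - wstar⟫ := by
        rw [← inner_neg_right]; congr 1; abel
      have enorm : ‖wstar - v k‖ = ‖v k - wstar‖ := norm_sub_rev _ _
      rw [eneg, enorm] at hs
      have enorm2 : ‖wb - v k‖ = ‖v k - wb‖ := norm_sub_rev _ _
      rw [esplit]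
      nlinarith
    have hsum2 : (K:ℝ) * F + μ / 2 * ∑ k, ‖v k - wstar‖ ^ 2 - β / 2 * S
        ≤ ∑ k, ⟪gradient f (v k), wb - wstar⟫ := by
      have := Finset.sum_le_sum (fun k (_ : k ∈ Finset.univ) => hterm k)
      rw [Finset.sum_sub_distrib, Finset.sum_add_distrib, Finset.sum_const, Finset.card_univ,
        Fintype.card_fin, ← Finset.mul_sum, ← Finset.mul_sum, nsmul_eq_mul] at this
      rw [hS']
      linarith
    have hjen : (K:ℝ) * a ≤ ∑ k, ‖v k - wstar‖ ^ 2 := by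
      have h1 : a = (K:ℝ)⁻¹ ^ 2 * ‖∑ k, (v k - wstar)‖ ^ 2 := by
        rw [ha, hwbavg, norm_smul, Real.norm_eq_abs, abs_of_nonneg (by positivity), mul_pow]
      have h2 := jensen_sq (fun k => v k - wstar)
      rw [h1]
      have hKne : (K:ℝ) ≠ 0 := hKr.ne'
      calc (K:ℝ) * ((K:ℝ)⁻¹ ^ 2 * ‖∑ k, (v k - wstar)‖ ^ 2)
          ≤ (K:ℝ) * ((K:ℝ)⁻¹ ^ 2 * ((K:ℝ) * ∑ k, ‖v k - wstar‖ ^ 2)) := by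
            exact mul_le_mul_of_nonneg_left (mul_le_mul_of_nonneg_left h2 (by positivity))
              (by positivity)
        _ = ∑ k, ‖v k - wstar‖ ^ 2 := by
            field_simp
    rw [hsum]
    rw [hT']
    have : (K:ℝ) * F + μ/2 * ((K:ℝ) * a) - β/2 * S
        ≤ ∑ k, ⟪gradient f (v k), wb - wstar⟫ := by nlinarith
    rw [← sub_nonneg] at this ⊢
    have expand2 : (K:ℝ)⁻¹ * (∑ k, ⟪gradient f (v k), wb - wstar⟫)
        - (F + μ/2 * a - β/2 * ((K:ℝ)⁻¹ * S))
        = (K:ℝ)⁻¹ * ((∑ k, ⟪gradient f (v k), wb - wstar⟫)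
          - ((K:ℝ) * F + μ/2 * ((K:ℝ) * a) - β/2 * S)) := by
      field_simp
    rw [expand2]
    exact mul_nonneg (by positivity) (by linarith)
  -- upper bound for G
  have hG : G ≤ 2 * β * F + β ^ 2 * T := by
    have h1 : G ≤ (K:ℝ)⁻¹ * ∑ k, ‖gradient f (v k)‖ ^ 2 := by
      have h2 := jensen_sq (fun k => gradient f (v k))
      have h3 : G = (K:ℝ)⁻¹ ^ 2 * ‖∑ k, gradient f (v k)‖ ^ 2 := by
        rw [hG', hgb, norm_smul, Real.norm_eq_abs, abs_of_nonneg (by positivity), mul_pow]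
      rw [h3]
      calc (K:ℝ)⁻¹ ^ 2 * ‖∑ k, gradient f (v k)‖ ^ 2
          ≤ (K:ℝ)⁻¹ ^ 2 * ((K:ℝ) * ∑ k, ‖gradient f (v k)‖ ^ 2) :=
            mul_le_mul_of_nonneg_left h2 (by positivity)
        _ = (K:ℝ)⁻¹ * ∑ k, ‖gradient f (v k)‖ ^ 2 := by
            field_simp
    have h4 : ∑ k, ‖gradient f (v k)‖ ^ 2 ≤ 2 * β * ∑ k, (f (v k) - f wstar) :=
      le_trans (Finset.sum_le_sum fun k _ =>
        grad_sq_le hβ hμ' hsmooth hstrong wstar hmin (v k)) (by rw [Finset.mul_sum])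
    have h5 : ∑ k, (f (v k) - f wstar) ≤ (K:ℝ) * F + β / 2 * S := by
      have hterm : ∀ k, f (v k) - f wstar
          ≤ F + ⟪gradient f wb, v k - wb⟫ + β / 2 * ‖wb - v k‖ ^ 2 := by
        intro k
        have hd := descent hβ hμ' hsmooth hstrong wb (v k)
        have enorm : ‖v k - wb‖ = ‖wb - v k‖ := norm_sub_rev _ _
        rw [enorm] at hd
        rw [hF']
        linarith
      have hs := Finset.sum_le_sum (fun k (_ : k ∈ Finset.univ) => hterm k)
      rw [Finset.sum_add_distrib, Finset.sum_add_distrib, ← inner_sum, hdev0,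
        inner_zero_right, Finset.sum_const, Finset.card_univ, Fintype.card_fin,
        nsmul_eq_mul, ← Finset.mul_sum] at hs
      rw [hS']
      linarith
    have h6 : (K:ℝ)⁻¹ * ∑ k, ‖gradient f (v k)‖ ^ 2
        ≤ (K:ℝ)⁻¹ * (2 * β * ((K:ℝ) * F + β / 2 * S)) := by
      refine mul_le_mul_of_nonneg_left ?_ (by positivity)
      calc ∑ k, ‖gradient f (v k)‖ ^ 2 ≤ 2 * β * ∑ k, (f (v k) - f wstar) := h4
        _ ≤ 2 * β * ((K:ℝ) * F + β / 2 * S) := by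
            exact mul_le_mul_of_nonneg_left h5 (by positivity)
    have h7 : (K:ℝ)⁻¹ * (2 * β * ((K:ℝ) * F + β / 2 * S)) = 2 * β * F + β ^ 2 * T := by
      rw [hT']
      field_simp
    exact h1.trans (h6.trans (le_of_eq h7))
  -- combine
  have h4βη : β * η ≤ 1 / 4 := by
    rw [le_div_iff₀ (by positivity)] at hη4
    nlinarith
  have key : a - 2 * η * P + η ^ 2 * G
      ≤ (1 - μ * η) * a - 1 / 2 * η * F + 2 * η * β * T := by
    have k1 : 2 * η * (F + μ / 2 * a - β / 2 * T) ≤ 2 * η * P :=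
      mul_le_mul_of_nonneg_left hP (by positivity)
    have k2 : η ^ 2 * G ≤ η ^ 2 * (2 * β * F + β ^ 2 * T) :=
      mul_le_mul_of_nonneg_left hG (by positivity)
    have k3 : 0 ≤ η * F * (1 - 4 * (β * η)) :=
      mul_nonneg (mul_nonneg hη.le hF) (by linarith)
    have k4 : 0 ≤ β * η * T * (1 - 4 * (β * η)) :=
      mul_nonneg (mul_nonneg (mul_nonneg hβ.le hη.le) hT) (by linarith)
    nlinarith [mul_nonneg (mul_nonneg hβ.le hη.le) hT]
  calc ‖wb - wstar - η • gb‖ ^ 2 = a - 2 * η * P + η ^ 2 * G := expand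
    _ ≤ (1 - μ * η) * a - 1 / 2 * η * F + 2 * η * β * T := key
    _ = (1 - μ * η) * a - 1 / 2 * η * F + 2 * η * (β / K) * S := by
        rw [hT']; ring
  -- done

end LocalSGDAux

open LocalSGDAux

/-- convergence of the averaged weights, one step: for partial-synchroni-
zation local SGD on a `β`-smooth, `μ`-strongly convex `f` with minimizer `w*`, unbiased
stochastic gradients and stepsizes `η_r ≤ 1/(4β)`, with `w̄_r = (1/K)Σ_k w_r^k`,
`g_r = (1/K)Σ_k ∇f(w_r^k;ξ_r^k)` and `ḡ_r = (1/K)Σ_k ∇f(w_r^k)`, every iteration `r`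
satisfies `E‖w̄_{r+1} − w*‖² ≤ (1 − μη_r) E‖w̄_r − w*‖² + η_r² E‖g_r − ḡ_r‖²
− (η_r/2) E(f(w̄_r) − f*) + 2η_r (β/K) Σ_k E‖w̄_r − w_r^k‖²`. -/
theorem averaged_weights_one_step_inequality
    (d L K H : ℕ) (hK : 0 < K) (hH : 0 < H)
    (f : EuclideanSpace ℝ (Fin d) → ℝ)
    (β μ : ℝ) (hβ : 0 < β) (hμ : 0 < μ)
    (hsmooth : LipschitzWith β.toNNReal (fun x => gradient f x))
    (hstrong : ∀ x y, f x + ⟪gradient f x, y - x⟫ + μ / 2 * ‖y - x‖ ^ 2 ≤ f y)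
    (wstar : EuclideanSpace ℝ (Fin d)) (hmin : ∀ w, f wstar ≤ f w)
    -- probability space and noise
    (Ω : Type) [MeasurableSpace Ω] (P : Measure Ω) [IsProbabilityMeasure P]
    (Ξ : Type) [MeasurableSpace Ξ] (ν : Measure Ξ) [IsProbabilityMeasure ν]
    (ξ : ℕ → Fin K → Ω → Ξ)
    (hξmeas : ∀ r k, Measurable (ξ r k))
    (hξlaw : ∀ r k, Measure.map (ξ r k) P = ν)
    (hξindep : iIndepFun (fun q : ℕ × Fin K => ξ q.1 q.2) P)
    -- unbiased stochastic gradient oracle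
    (SG : EuclideanSpace ℝ (Fin d) → Ξ → EuclideanSpace ℝ (Fin d))
    (hSGmeas : Measurable (Function.uncurry SG))
    (hunbiased : ∀ x, ∫ s, SG x s ∂ν = gradient f x)
    -- stepsizes
    (η : ℕ → ℝ) (hηpos : ∀ r, 0 < η r) (hηsmall : ∀ r, η r ≤ 1 / (4 * β))
    -- layer structure and iterates of partial-synchronization local SGD
    (layer : Fin d → Fin L) (Hidx : Fin L → Fin H)
    (w : ℕ → Fin K → Ω → EuclideanSpace ℝ (Fin d))
    (w0 : EuclideanSpace ℝ (Fin d))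
    (hinit : ∀ k ω, w 0 k ω = w0)
    (hupdate : ∀ r k ω (i : Fin d),
      w (r + 1) k ω i =
        if (r + 1) % H = (Hidx (layer i) : ℕ) then
          (K : ℝ)⁻¹ • ∑ j, (w r j ω - η r • SG (w r j ω) (ξ r j ω)) i
        else (w r k ω - η r • SG (w r k ω) (ξ r k ω)) i)
    -- averaged iterates and gradients
    (wbar : ℕ → Ω → EuclideanSpace ℝ (Fin d))
    (hwbar : ∀ r ω, wbar r ω = (K : ℝ)⁻¹ • ∑ k, w r k ω)
    (g gbar : ℕ → Ω → EuclideanSpace ℝ (Fin d))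
    (hg : ∀ r ω, g r ω = (K : ℝ)⁻¹ • ∑ k, SG (w r k ω) (ξ r k ω))
    (hgbar : ∀ r ω, gbar r ω = (K : ℝ)⁻¹ • ∑ k, gradient f (w r k ω))
    -- integrability of all quantities appearing in the inequality
    (hint₁ : ∀ r, Integrable (fun ω => ‖wbar r ω - wstar‖ ^ 2) P)
    (hint₂ : ∀ r, Integrable (fun ω => ‖g r ω - gbar r ω‖ ^ 2) P)
    (hint₃ : ∀ r, Integrable (fun ω => f (wbar r ω)) P)
    (hint₄ : ∀ r k, Integrable (fun ω => ‖wbar r ω - w r k ω‖ ^ 2) P) :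
    ∀ r, ∫ ω, ‖wbar (r + 1) ω - wstar‖ ^ 2 ∂P ≤
      (1 - μ * η r) * ∫ ω, ‖wbar r ω - wstar‖ ^ 2 ∂P
        + η r ^ 2 * ∫ ω, ‖g r ω - gbar r ω‖ ^ 2 ∂P
        - 1 / 2 * η r * ∫ ω, (f (wbar r ω) - f wstar) ∂P
        + 2 * η r * (β / K) * ∑ k, ∫ ω, ‖wbar r ω - w r k ω‖ ^ 2 ∂P := by
  intro r
  have hKr : (0:ℝ) < K := by exact_mod_cast hK
  have hηr := hηpos r
  -- gradient vanishes at the minimizer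
  have hgw0 : gradient f wstar = 0 := by
    have h := grad_sq_le hβ hμ.le hsmooth hstrong wstar hmin wstar
    have h2 : ‖gradient f wstar‖ = 0 := by nlinarith [norm_nonneg (gradient f wstar)]
    exact norm_eq_zero.mp h2
  -- factorization of the iterates through the past seeds
  have hfact : ∀ n : ℕ, ∃ Φ : (({q : ℕ × Fin K // q.1 < n}) → Ξ) →
      (Fin K → EuclideanSpace ℝ (Fin d)),
      Measurable Φ ∧ ∀ ω k, w n k ω = Φ (fun q => ξ q.1.1 q.1.2 ω) k := by
    intro n
    induction n with
    | zero => exact ⟨fun _ _ => w0, measurable_const, fun ω k => hinit k ω⟩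
    | succ n ih =>
      obtain ⟨Φ, hΦm, hΦ⟩ := ih
      set res : ({q : ℕ × Fin K // q.1 < n+1} → Ξ) → ({q : ℕ × Fin K // q.1 < n} → Ξ) :=
        fun v q => v ⟨q.1, Nat.lt_succ_of_lt q.2⟩ with hres
      have hresm : Measurable res := measurable_pi_lambda _ fun q => measurable_pi_apply _
      set stp : ({q : ℕ × Fin K // q.1 < n+1} → Ξ) → Fin K → EuclideanSpace ℝ (Fin d) :=
        fun v j => Φ (res v) j - η n • SG (Φ (res v) j) (v ⟨(n, j), Nat.lt_succ_self n⟩)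
        with hstp
      have hstpm : ∀ j, Measurable fun v => stp v j := by
        intro j
        have h1 : Measurable fun v => Φ (res v) j :=
          (measurable_pi_apply j).comp (hΦm.comp hresm)
        have h2 : Measurable fun v : ({q : ℕ × Fin K // q.1 < n+1} → Ξ) =>
            SG (Φ (res v) j) (v ⟨(n, j), Nat.lt_succ_self n⟩) :=
          hSGmeas.comp (h1.prodMk (measurable_pi_apply _))
        exact h1.sub (h2.fun_const_smul (η n))
      refine ⟨fun v k => WithLp.toLp 2 (fun i => if (n+1) % H = (Hidx (layer i) : ℕ)
          then ((K:ℝ)⁻¹ • ∑ j, stp v j : EuclideanSpace ℝ (Fin d)) i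
          else (stp v k) i), ?_, ?_⟩
      · apply measurable_pi_lambda
        intro k
        apply (WithLp.measurable_toLp 2 (Fin d → ℝ)).comp
        apply measurable_pi_iff.mpr
        intro i
        by_cases hcond : (n+1) % H = (Hidx (layer i) : ℕ)
        · simp only [hcond, if_true]
          have e : (fun v => ((K:ℝ)⁻¹ • ∑ j, stp v j : EuclideanSpace ℝ (Fin d)) i)
              = fun v => (K:ℝ)⁻¹ * ∑ j, (stp v j) i := by
            funext v
            show (K:ℝ)⁻¹ * (∑ j, stp v j) i = _
            rw [WithLp.ofLp_sum, Finset.sum_apply]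
          rw [e]
          exact (Finset.measurable_sum Finset.univ fun j _ =>
            (measurable_pi_apply i).comp ((WithLp.measurable_ofLp 2 _).comp (hstpm j))).const_mul _
        · simp only [hcond, if_false]
          exact (measurable_pi_apply i).comp ((WithLp.measurable_ofLp 2 _).comp (hstpm k))
      · intro ω k
        have hsv : ∀ j, stp (fun q : {q : ℕ × Fin K // q.1 < n+1} => ξ q.1.1 q.1.2 ω) j
            = w n j ω - η n • SG (w n j ω) (ξ n j ω) := by
          intro j
          have hw : Φ (res (fun q : {q : ℕ × Fin K // q.1 < n+1} => ξ q.1.1 q.1.2 ω)) j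
              = w n j ω := (hΦ ω j).symm
          simp only [hstp]
          rw [hw]
        ext i
        rw [hupdate n k ω i]
        by_cases hcond : (n+1) % H = (Hidx (layer i) : ℕ)
        · simp only [WithLp.ofLp_toLp, hcond, if_true]
          show (K:ℝ)⁻¹ • ∑ j, (w n j ω - η n • SG (w n j ω) (ξ n j ω)) i
              = (K:ℝ)⁻¹ * (∑ j, stp (fun q => ξ q.1.1 q.1.2 ω) j) i
          rw [WithLp.ofLp_sum, Finset.sum_apply]
          rw [show ((K:ℝ)⁻¹ • ∑ j, (w n j ω - η n • SG (w n j ω) (ξ n j ω)) i)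
            = (K:ℝ)⁻¹ * ∑ j, (w n j ω - η n • SG (w n j ω) (ξ n j ω)) i from rfl]
          congr 1
          exact Finset.sum_congr rfl fun j _ => by rw [hsv j]
        · simp only [WithLp.ofLp_toLp, hcond, if_false]
          show (w n k ω - η n • SG (w n k ω) (ξ n k ω)) i
              = (stp (fun q => ξ q.1.1 q.1.2 ω) k) i
          rw [hsv k]
  obtain ⟨Φ, hΦm, hΦ⟩ := hfact r
  -- seed maps
  set X : Ω → ({q : ℕ × Fin K // q.1 < r} → Ξ) := fun ω q => ξ q.1.1 q.1.2 ω with hX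
  have hXmeas : Measurable X := measurable_pi_lambda _ fun q => hξmeas _ _
  set Y : Ω → (Fin K → Ξ) := fun ω k => ξ r k ω with hY
  have hYmeas : Measurable Y := measurable_pi_lambda _ fun k => hξmeas _ _
  have hwX : ∀ ω k, w r k ω = Φ (X ω) k := fun ω k => hΦ ω k
  have hwmeas : ∀ k, Measurable (fun ω => w r k ω) := by
    intro k
    have : (fun ω => w r k ω) = fun ω => Φ (X ω) k := funext fun ω => hwX ω k
    rw [this]
    exact (measurable_pi_apply k).comp (hΦm.comp hXmeas)
  have hgradmeas : Measurable (fun x : EuclideanSpace ℝ (Fin d) => gradient f x) :=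
    hsmooth.continuous.measurable
  have hwbarmeas : Measurable (wbar r) := by
    have : wbar r = fun ω => (K : ℝ)⁻¹ • ∑ k, w r k ω := funext fun ω => hwbar r ω
    rw [this]
    exact (Finset.measurable_sum Finset.univ fun k _ => hwmeas k).fun_const_smul _
  have hgmeas : Measurable (g r) := by
    have : g r = fun ω => (K : ℝ)⁻¹ • ∑ k, SG (w r k ω) (ξ r k ω) := funext fun ω => hg r ω
    rw [this]
    exact (Finset.measurable_sum Finset.univ fun k _ =>
      hSGmeas.comp ((hwmeas k).prodMk (hξmeas r k))).fun_const_smul _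
  have hgbarmeas : Measurable (gbar r) := by
    have : gbar r = fun ω => (K : ℝ)⁻¹ • ∑ k, gradient f (w r k ω) := funext fun ω => hgbar r ω
    rw [this]
    exact (Finset.measurable_sum Finset.univ fun k _ => hgradmeas.comp (hwmeas k)).fun_const_smul _
  -- A and D
  set A : Ω → EuclideanSpace ℝ (Fin d) :=
    fun ω => wbar r ω - wstar - η r • gbar r ω with hA
  set D : Ω → EuclideanSpace ℝ (Fin d) := fun ω => g r ω - gbar r ω with hD
  have hAmeas : Measurable A := ((hwbarmeas.sub measurable_const).sub (hgbarmeas.fun_const_smul _))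
  have hDmeas : Measurable D := hgmeas.sub hgbarmeas
  have hD2 : MemLp D 2 P :=
    (memLp_two_iff_integrable_sq_norm hDmeas.aestronglyMeasurable).mpr (hint₂ r)
  have hDint : Integrable D P := by
    refine Integrable.mono' ((integrable_const (1:ℝ)).add (hint₂ r))
      hDmeas.aestronglyMeasurable (ae_of_all _ fun ω => ?_)
    have := norm_nonneg (D ω)
    simp only [Pi.add_apply]
    nlinarith [sq_nonneg (‖D ω‖ - 1)]
  -- MemLp bound for A
  have hAmem : MemLp A 2 P := by
    set Gd : Ω → ℝ := fun ω => ‖wbar r ω - wstar‖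
      + η r * ((K:ℝ)⁻¹ * ∑ k, (β * (‖wbar r ω - w r k ω‖ + ‖wbar r ω - wstar‖))) with hGd
    have m1 : MemLp (fun ω => wbar r ω - wstar) 2 P :=
      (memLp_two_iff_integrable_sq_norm
        ((hwbarmeas.sub measurable_const).aestronglyMeasurable)).mpr (hint₁ r)
    have m1n : MemLp (fun ω => ‖wbar r ω - wstar‖) 2 P := m1.norm
    have m4 : ∀ k, MemLp (fun ω => ‖wbar r ω - w r k ω‖) 2 P := fun k =>
      ((memLp_two_iff_integrable_sq_norm
        ((hwbarmeas.sub (hwmeas k)).aestronglyMeasurable)).mpr (hint₄ r k)).norm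
    have mS : MemLp (fun ω => ∑ k, (β * (‖wbar r ω - w r k ω‖ + ‖wbar r ω - wstar‖))) 2 P := by
      have hh := memLp_finset_sum' (μ := P) Finset.univ
        (f := fun k ω => β * (‖wbar r ω - w r k ω‖ + ‖wbar r ω - wstar‖))
        (fun k _ => ((m4 k).add m1n).const_mul β)
      rwa [show (∑ k : Fin K, fun ω => β * (‖wbar r ω - w r k ω‖ + ‖wbar r ω - wstar‖))
        = (fun ω => ∑ k : Fin K, β * (‖wbar r ω - w r k ω‖ + ‖wbar r ω - wstar‖))
        from funext fun ω => Finset.sum_apply ω Finset.univ _] at hh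
    have mGd : MemLp Gd 2 P := m1n.add ((mS.const_mul ((K:ℝ)⁻¹)).const_mul (η r))
    refine MemLp.of_le mGd hAmeas.aestronglyMeasurable (ae_of_all _ fun ω => ?_)
    have hgb : ‖gbar r ω‖ ≤ (K:ℝ)⁻¹ * ∑ k, (β * (‖wbar r ω - w r k ω‖ + ‖wbar r ω - wstar‖)) := by
      rw [hgbar r ω, norm_smul, Real.norm_eq_abs, abs_of_nonneg (by positivity)]
      refine mul_le_mul_of_nonneg_left ?_ (by positivity)
      refine le_trans (norm_sum_le _ _) (Finset.sum_le_sum fun k _ => ?_)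
      have h1 : ‖gradient f (w r k ω)‖ ≤ β * ‖w r k ω - wstar‖ := by
        have := lip_grad hβ hsmooth (w r k ω) wstar
        rwa [hgw0, sub_zero] at this
      have h2 : ‖w r k ω - wstar‖ ≤ ‖wbar r ω - w r k ω‖ + ‖wbar r ω - wstar‖ := by
        have e : w r k ω - wstar = -(wbar r ω - w r k ω) + (wbar r ω - wstar) := by abel
        rw [e]
        exact le_trans (norm_add_le _ _) (by rw [norm_neg])
      calc ‖gradient f (w r k ω)‖ ≤ β * ‖w r k ω - wstar‖ := h1
        _ ≤ β * (‖wbar r ω - w r k ω‖ + ‖wbar r ω - wstar‖) :=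
          mul_le_mul_of_nonneg_left h2 hβ.le
    have hbound : ‖A ω‖ ≤ Gd ω := by
      have h1 : ‖A ω‖ ≤ ‖wbar r ω - wstar‖ + η r * ‖gbar r ω‖ := by
        simp only [hA]
        refine le_trans (norm_sub_le _ _) ?_
        rw [norm_smul, Real.norm_eq_abs, abs_of_nonneg hηr.le]
      refine le_trans h1 ?_
      rw [hGd]
      have := mul_le_mul_of_nonneg_left hgb hηr.le
      linarith
    have hGnn : 0 ≤ Gd ω := le_trans (norm_nonneg _) hbound
    rw [Real.norm_eq_abs, abs_of_nonneg hGnn]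
    exact hbound
  have hA2int : Integrable (fun ω => ‖A ω‖ ^ 2) P :=
    (memLp_two_iff_integrable_sq_norm hAmeas.aestronglyMeasurable).mp hAmem
  have crossInt : Integrable (fun ω => ⟪A ω, D ω⟫) P := by
    have h := L2.integrable_inner (𝕜 := ℝ) (hAmem.toLp A) (hD2.toLp D)
    refine h.congr ?_
    filter_upwards [hAmem.coeFn_toLp, hD2.coeFn_toLp] with ω h1 h2
    rw [h1, h2]
  -- KEY: the cross term has zero expectation
  have ED0 : ∫ ω, ⟪A ω, D ω⟫ ∂P = 0 := by
    classical
    -- independence of past and present seeds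
    have hdisj : Disjoint (Finset.range r ×ˢ (Finset.univ : Finset (Fin K)))
        ({r} ×ˢ (Finset.univ : Finset (Fin K))) := by
      rw [Finset.disjoint_left]
      rintro ⟨a, b⟩ hS hT
      rw [Finset.mem_product, Finset.mem_range] at hS
      rw [Finset.mem_product, Finset.mem_singleton] at hT
      omega
    have hXY : IndepFun X Y P := by
      have base := hξindep.indepFun_finset (Finset.range r ×ˢ (Finset.univ : Finset (Fin K)))
        ({r} ×ˢ (Finset.univ : Finset (Fin K))) hdisj (fun q => hξmeas q.1 q.2)
      have hφS : Measurable (fun v : ({x // x ∈ Finset.range r ×ˢ (Finset.univ : Finset (Fin K))} → Ξ)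
          => (fun q : {q : ℕ × Fin K // q.1 < r} => v ⟨q.1,
            Finset.mem_product.mpr ⟨Finset.mem_range.mpr q.2, Finset.mem_univ _⟩⟩)) :=
        measurable_pi_lambda _ fun q => measurable_pi_apply _
      have hφT : Measurable (fun v : ({x // x ∈ ({r} ×ˢ (Finset.univ : Finset (Fin K)))} → Ξ)
          => (fun k : Fin K => v ⟨(r, k),
            Finset.mem_product.mpr ⟨Finset.mem_singleton_self r, Finset.mem_univ _⟩⟩)) :=
        measurable_pi_lambda _ fun k => measurable_pi_apply _
      exact base.comp hφS hφT
    haveI : IsProbabilityMeasure (Measure.map Y P) :=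
      Measure.isProbabilityMeasure_map hYmeas.aemeasurable
    haveI : IsProbabilityMeasure (Measure.map X P) :=
      Measure.isProbabilityMeasure_map hXmeas.aemeasurable
    have hpair : Measure.map (fun ω => (X ω, Y ω)) P
        = (Measure.map X P).prod (Measure.map Y P) :=
      (indepFun_iff_map_prod_eq_prod_map_map hXmeas.aemeasurable hYmeas.aemeasurable).mp hXY
    have hmarg : ∀ k : Fin K, Measure.map (fun y : Fin K → Ξ => y k) (Measure.map Y P) = ν := by
      intro k
      rw [Measure.map_map (measurable_pi_apply k) hYmeas]
      exact hξlaw r k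
    -- the integrand as a function of the seeds
    set a0 : ({q : ℕ × Fin K // q.1 < r} → Ξ) → EuclideanSpace ℝ (Fin d) :=
      fun x => (K:ℝ)⁻¹ • ∑ k, Φ x k - wstar - η r • ((K:ℝ)⁻¹ • ∑ k, gradient f (Φ x k))
      with ha0
    have ha0meas : Measurable a0 := by
      have h1 : Measurable fun x : ({q : ℕ × Fin K // q.1 < r} → Ξ) => (K:ℝ)⁻¹ • ∑ k, Φ x k :=
        (Finset.measurable_sum Finset.univ fun k _ => (measurable_pi_apply k).comp hΦm).fun_const_smul _
      have h2 : Measurable fun x : ({q : ℕ × Fin K // q.1 < r} → Ξ) =>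
          (K:ℝ)⁻¹ • ∑ k, gradient f (Φ x k) :=
        (Finset.measurable_sum Finset.univ fun k _ =>
          hgradmeas.comp ((measurable_pi_apply k).comp hΦm)).fun_const_smul _
      exact (h1.sub measurable_const).sub (h2.fun_const_smul _)
    set hfun : (({q : ℕ × Fin K // q.1 < r} → Ξ) × (Fin K → Ξ)) → ℝ :=
      fun p => ⟪a0 p.1, (K:ℝ)⁻¹ • ∑ k, (SG (Φ p.1 k) (p.2 k) - gradient f (Φ p.1 k))⟫
      with hhfun
    have hVmeas : Measurable fun p : (({q : ℕ × Fin K // q.1 < r} → Ξ) × (Fin K → Ξ)) =>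
        (K:ℝ)⁻¹ • ∑ k, (SG (Φ p.1 k) (p.2 k) - gradient f (Φ p.1 k)) := by
      refine Measurable.fun_const_smul (Finset.measurable_sum Finset.univ fun k _ => ?_) _
      have hW : Measurable fun p : (({q : ℕ × Fin K // q.1 < r} → Ξ) × (Fin K → Ξ)) =>
          Φ p.1 k := (measurable_pi_apply k).comp (hΦm.comp measurable_fst)
      exact (hSGmeas.comp (hW.prodMk ((measurable_pi_apply k).comp measurable_snd))).sub
        (hgradmeas.comp hW)
    have hfunmeas : Measurable hfun := (ha0meas.comp measurable_fst).inner hVmeas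
    have hcomp : ∀ ω, ⟪A ω, D ω⟫ = hfun (X ω, Y ω) := by
      intro ω
      have hAa : A ω = a0 (X ω) := by
        simp only [hA, ha0]
        rw [hwbar r ω, hgbar r ω,
          show (∑ k, w r k ω) = ∑ k, Φ (X ω) k from
            Finset.sum_congr rfl fun k _ => hwX ω k,
          show (∑ k, gradient f (w r k ω)) = ∑ k, gradient f (Φ (X ω) k) from
            Finset.sum_congr rfl fun k _ => by rw [hwX ω k]]
      have hDV : D ω = (K:ℝ)⁻¹ • ∑ k, (SG (Φ (X ω) k) (Y ω k) - gradient f (Φ (X ω) k)) := by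
        simp only [hD]
        rw [hg r ω, hgbar r ω, ← smul_sub, ← Finset.sum_sub_distrib]
        congr 1
        exact Finset.sum_congr rfl fun k _ => by rw [hwX ω k]
      rw [hhfun]
      show ⟪A ω, D ω⟫ = ⟪a0 (X ω), (K:ℝ)⁻¹ • ∑ k, (SG (Φ (X ω) k) (Y ω k)
        - gradient f (Φ (X ω) k))⟫
      rw [hAa, hDV]
    -- measurability of the set of integrable oracle points
    have hIntSetMeas : MeasurableSet {v : EuclideanSpace ℝ (Fin d) | Integrable (SG v) ν} := by
      have hmeas : ∀ v, Measurable (SG v) := fun v =>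
        hSGmeas.comp (measurable_const.prodMk measurable_id)
      have hset : {v : EuclideanSpace ℝ (Fin d) | Integrable (SG v) ν}
          = {v | (∫⁻ s, ‖SG v s‖ₑ ∂ν) < ⊤} := by
        ext v
        simp only [Set.mem_setOf_eq]
        constructor
        · intro h
          exact h.2
        · intro h
          exact ⟨(hmeas v).aestronglyMeasurable, h⟩
      rw [hset]
      exact measurableSet_lt (Measurable.lintegral_prod_right' hSGmeas.enorm) measurable_const
    -- almost surely, the oracle is integrable at each iterate
    have hstep9 : ∀ k : Fin K, ∀ᵐ ω ∂P, Integrable (SG (w r k ω)) ν := by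
      intro k
      set Sk : Finset (ℕ × Fin K) :=
        (Finset.range r ×ˢ Finset.univ) ∪ ({r} ×ˢ Finset.univ.erase k) with hSk
      have hmem₁ : ∀ q : {q : ℕ × Fin K // q.1 < r}, q.1 ∈ Sk := fun q =>
        Finset.mem_union_left _
          (Finset.mem_product.mpr ⟨Finset.mem_range.mpr q.2, Finset.mem_univ _⟩)
      have hmem₂ : ∀ j : Fin K, j ≠ k → ((r, j) : ℕ × Fin K) ∈ Sk := fun j hj =>
        Finset.mem_union_right _ (Finset.mem_product.mpr
          ⟨Finset.mem_singleton_self r, Finset.mem_erase.mpr ⟨hj, Finset.mem_univ _⟩⟩)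
      have hdisjk : Disjoint Sk ({(r, k)} : Finset (ℕ × Fin K)) := by
        rw [Finset.disjoint_singleton_right, hSk]
        intro hmem
        rcases Finset.mem_union.mp hmem with h | h
        · exact absurd (Finset.mem_range.mp (Finset.mem_product.mp h).1) (lt_irrefl r)
        · exact (Finset.mem_erase.mp (Finset.mem_product.mp h).2).1 rfl
      set XK : Ω → ({x // x ∈ Sk} → Ξ) := fun ω i => ξ i.1.1 i.1.2 ω with hXK
      have hXKmeas : Measurable XK := measurable_pi_lambda _ fun i => hξmeas _ _
      have hindepk : IndepFun XK (ξ r k) P := by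
        have base := hξindep.indepFun_finset Sk {(r,k)} hdisjk (fun q => hξmeas q.1 q.2)
        have h2 : Measurable (fun v : ({x // x ∈ ({(r,k)} : Finset (ℕ × Fin K))} → Ξ) =>
            v ⟨(r,k), Finset.mem_singleton_self _⟩) := measurable_pi_apply _
        exact base.comp measurable_id h2
      have hpairk : Measure.map (fun ω => (XK ω, ξ r k ω)) P = (Measure.map XK P).prod ν := by
        have h := (indepFun_iff_map_prod_eq_prod_map_map hXKmeas.aemeasurable
          (hξmeas r k).aemeasurable).mp hindepk
        rwa [hξlaw r k] at h
      set resk : ({x // x ∈ Sk} → Ξ) → ({q : ℕ × Fin K // q.1 < r} → Ξ) :=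
        fun v q => v ⟨q.1, hmem₁ q⟩ with hresk
      have hreskm : Measurable resk := measurable_pi_lambda _ fun q => measurable_pi_apply _
      set δ : (({x // x ∈ Sk} → Ξ) × Ξ) → EuclideanSpace ℝ (Fin d) := fun p =>
        (K:ℝ)⁻¹ • ∑ j, (SG (Φ (resk p.1) j)
          (if hj : j = k then p.2 else p.1 ⟨(r, j), hmem₂ j hj⟩)
          - gradient f (Φ (resk p.1) j)) with hδ
      have hδmeas : Measurable δ := by
        refine Measurable.fun_const_smul (Finset.measurable_sum Finset.univ fun j _ => ?_) _
        have hW : Measurable fun p : (({x // x ∈ Sk} → Ξ) × Ξ) => Φ (resk p.1) j :=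
          (measurable_pi_apply j).comp (hΦm.comp (hreskm.comp measurable_fst))
        have hseed : Measurable fun p : (({x // x ∈ Sk} → Ξ) × Ξ) =>
            (if hj : j = k then p.2 else p.1 ⟨(r, j), hmem₂ j hj⟩) := by
          by_cases hj : j = k
          · simp only [dif_pos hj]
            exact measurable_snd
          · simp only [dif_neg hj]
            exact (measurable_pi_apply _).comp measurable_fst
        exact (hSGmeas.comp (hW.prodMk hseed)).sub (hgradmeas.comp hW)
      have hδeq : ∀ ω, D ω = δ (XK ω, ξ r k ω) := by
        intro ω
        simp only [hD, hδ]
        rw [hg r ω, hgbar r ω, ← smul_sub, ← Finset.sum_sub_distrib]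
        congr 1
        refine Finset.sum_congr rfl fun j _ => ?_
        have hw : Φ (resk (XK ω)) j = w r j ω := (hΦ ω j).symm
        rw [hw]
        by_cases hj : j = k
        · subst hj
          rw [dif_pos rfl]
        · rw [dif_neg hj]
      have hδint : Integrable δ ((Measure.map XK P).prod ν) := by
        rw [← hpairk]
        exact (integrable_map_measure hδmeas.aestronglyMeasurable
          (hXKmeas.prodMk (hξmeas r k)).aemeasurable).mpr
          (hDint.congr (Eventually.of_forall hδeq))
      have hkey : ∀ᵐ x ∂(Measure.map XK P), Integrable (SG (Φ (resk x) k)) ν := by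
        filter_upwards [hδint.prod_right_ae] with x hx
        set B : EuclideanSpace ℝ (Fin d) :=
          (∑ j, if hj : j = k then (0:EuclideanSpace ℝ (Fin d))
            else SG (Φ (resk x) j) (x ⟨(r, j), hmem₂ j hj⟩))
          - ∑ j, gradient f (Φ (resk x) j) with hB
        have hclaim : ∀ y, δ (x, y) = (K:ℝ)⁻¹ • (SG (Φ (resk x) k) y + B) := by
          intro y
          simp only [hδ, hB]
          congr 1
          rw [Finset.sum_sub_distrib]
          have hsplit : ∀ j : Fin K, SG (Φ (resk x) j)
              (if hj : j = k then y else x ⟨(r, j), hmem₂ j hj⟩)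
              = (if hj : j = k then (0:EuclideanSpace ℝ (Fin d))
                  else SG (Φ (resk x) j) (x ⟨(r, j), hmem₂ j hj⟩))
                + (if j = k then SG (Φ (resk x) k) y else 0) := by
            intro j
            by_cases hj : j = k
            · subst hj
              rw [dif_pos rfl, dif_pos rfl, if_pos rfl, zero_add]
            · rw [dif_neg hj, dif_neg hj, if_neg hj, add_zero]
          rw [Finset.sum_congr rfl fun j _ => hsplit j, Finset.sum_add_distrib,
            Finset.sum_ite_eq' Finset.univ k (fun _ => SG (Φ (resk x) k) y)]
          simp only [Finset.mem_univ, if_true]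
          abel
        have hxI : Integrable (fun y => (K:ℝ)⁻¹ • (SG (Φ (resk x) k) y + B)) ν :=
          hx.congr (Eventually.of_forall fun y => hclaim y)
        have h2 : Integrable (fun y => SG (Φ (resk x) k) y + B) ν := by
          have h3 := hxI.smul (K:ℝ)
          refine h3.congr (Eventually.of_forall fun y => ?_)
          show (K:ℝ) • ((K:ℝ)⁻¹ • (SG (Φ (resk x) k) y + B)) = _
          rw [smul_smul, mul_inv_cancel₀ hKr.ne', one_smul]
        have h4 := h2.sub (integrable_const B)
        refine h4.congr (Eventually.of_forall fun y => ?_)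
        show SG (Φ (resk x) k) y + B - B = _
        exact add_sub_cancel_right _ _
      have hkey2 := ae_of_ae_map hXKmeas.aemeasurable hkey
      filter_upwards [hkey2] with ω h
      have hw : Φ (resk (XK ω)) k = w r k ω := (hΦ ω k).symm
      rwa [hw] at h
    have hgood : ∀ᵐ x ∂(Measure.map X P), ∀ k, Integrable (SG (Φ x k)) ν := by
      rw [ae_all_iff]
      intro k
      have hsetm : MeasurableSet
          {x : ({q : ℕ × Fin K // q.1 < r} → Ξ) | Integrable (SG (Φ x k)) ν} :=
        ((measurable_pi_apply k).comp hΦm) hIntSetMeas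
      rw [ae_map_iff hXmeas.aemeasurable hsetm]
      filter_upwards [hstep9 k] with ω h
      show Integrable (SG (Φ (X ω) k)) ν
      rwa [show Φ (X ω) k = w r k ω from (hΦ ω k).symm]
    -- inner integral vanishes on the good set
    have hinner0 : ∀ x : ({q : ℕ × Fin K // q.1 < r} → Ξ),
        (∀ k, Integrable (SG (Φ x k)) ν) →
        ∫ y, hfun (x, y) ∂(Measure.map Y P) = 0 := by
      intro x hx
      have hSGvmeas : ∀ k : Fin K, Measurable (SG (Φ x k)) := fun k =>
        hSGmeas.comp (measurable_const.prodMk measurable_id)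
      have hterm : ∀ k : Fin K, Integrable (fun y : Fin K → Ξ => SG (Φ x k) (y k))
          (Measure.map Y P) := by
        intro k
        exact (integrable_map_measure (hSGvmeas k).aestronglyMeasurable
          (measurable_pi_apply k).aemeasurable).mp (by rw [hmarg k]; exact hx k)
      have hterm2 : ∀ k : Fin K, Integrable
          (fun y : Fin K → Ξ => SG (Φ x k) (y k) - gradient f (Φ x k)) (Measure.map Y P) :=
        fun k => (hterm k).sub (integrable_const _)
      have hVint : Integrable (fun y : Fin K → Ξ =>
          (K:ℝ)⁻¹ • ∑ k, (SG (Φ x k) (y k) - gradient f (Φ x k))) (Measure.map Y P) := by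
        exact (integrable_finset_sum _ fun k _ => hterm2 k).smul ((K:ℝ)⁻¹)
      have e0 : ∫ y, hfun (x, y) ∂(Measure.map Y P)
          = ⟪a0 x, ∫ y, (K:ℝ)⁻¹ • ∑ k, (SG (Φ x k) (y k) - gradient f (Φ x k))
              ∂(Measure.map Y P)⟫ :=
        integral_inner hVint (a0 x)
      rw [e0]
      have eV : ∫ y, (K:ℝ)⁻¹ • ∑ k, (SG (Φ x k) (y k) - gradient f (Φ x k))
          ∂(Measure.map Y P) = 0 := by
        rw [integral_smul, integral_finset_sum _ fun k _ => hterm2 k]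
        have ek : ∀ k : Fin K,
            ∫ y, (SG (Φ x k) (y k) - gradient f (Φ x k)) ∂(Measure.map Y P) = 0 := by
          intro k
          rw [integral_sub (hterm k) (integrable_const _), integral_const]
          have hm : ∫ y, SG (Φ x k) (y k) ∂(Measure.map Y P) = ∫ s, SG (Φ x k) s ∂ν := by
            rw [← hmarg k, integral_map (measurable_pi_apply k).aemeasurable
              (hSGvmeas k).aestronglyMeasurable]
          rw [hm, hunbiased]
          simp [measure_univ]
        rw [Finset.sum_congr rfl fun k _ => ek k]
        simp
      rw [eV, inner_zero_right]
    -- put everything together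
    have hhint : Integrable hfun ((Measure.map X P).prod (Measure.map Y P)) := by
      rw [← hpair]
      exact (integrable_map_measure hfunmeas.aestronglyMeasurable
        (hXmeas.prodMk hYmeas).aemeasurable).mpr
        (crossInt.congr (Eventually.of_forall hcomp))
    calc ∫ ω, ⟪A ω, D ω⟫ ∂P
        = ∫ ω, hfun (X ω, Y ω) ∂P := integral_congr_ae (Eventually.of_forall hcomp)
      _ = ∫ p, hfun p ∂(Measure.map (fun ω => (X ω, Y ω)) P) :=
          (integral_map (hXmeas.prodMk hYmeas).aemeasurable
            hfunmeas.aestronglyMeasurable).symm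
      _ = ∫ p, hfun p ∂((Measure.map X P).prod (Measure.map Y P)) := by rw [hpair]
      _ = ∫ x, ∫ y, hfun (x, y) ∂(Measure.map Y P) ∂(Measure.map X P) :=
          integral_prod _ hhint
      _ = 0 := by
          rw [integral_congr_ae (μ := Measure.map X P)
            (g := fun _ => (0:ℝ)) (by filter_upwards [hgood] with x hx using hinner0 x hx)]
          simp
  -- one-step evolution of the average
  have hstep1 : ∀ ω, wbar (r+1) ω = wbar r ω - η r • g r ω := by
    intro ω
    ext i
    have trhs : (wbar r ω - η r • g r ω) i
        = (K:ℝ)⁻¹ * ∑ k, (w r k ω - η r • SG (w r k ω) (ξ r k ω)) i := by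
      show (wbar r ω) i - η r * (g r ω) i = _
      rw [hwbar r ω, hg r ω]
      show (K:ℝ)⁻¹ * (∑ k, w r k ω) i - η r * ((K:ℝ)⁻¹ * (∑ k, SG (w r k ω) (ξ r k ω)) i) = _
      rw [WithLp.ofLp_sum, WithLp.ofLp_sum, Finset.sum_apply, Finset.sum_apply]
      have e : ∀ k : Fin K, (w r k ω - η r • SG (w r k ω) (ξ r k ω)) i
          = w r k ω i - η r * (SG (w r k ω) (ξ r k ω)) i := fun k => rfl
      rw [Finset.sum_congr rfl fun k _ => e k, Finset.sum_sub_distrib, ← Finset.mul_sum]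
      ring
    rw [hwbar (r+1) ω]
    show (K:ℝ)⁻¹ * (∑ k, w (r+1) k ω) i = (wbar r ω - η r • g r ω) i
    rw [WithLp.ofLp_sum, Finset.sum_apply, trhs]
    congr 1
    by_cases hcond : (r + 1) % H = (Hidx (layer i) : ℕ)
    · have hv : ∀ k : Fin K, w (r+1) k ω i
          = (K : ℝ)⁻¹ * ∑ j, (w r j ω - η r • SG (w r j ω) (ξ r j ω)) i := by
        intro k
        rw [hupdate r k ω i, if_pos hcond]
        rfl
      rw [Finset.sum_congr rfl fun k _ => hv k, Finset.sum_const, Finset.card_univ,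
        Fintype.card_fin, nsmul_eq_mul]
      rw [← mul_assoc, mul_inv_cancel₀ hKr.ne', one_mul]
    · exact Finset.sum_congr rfl fun k _ => by rw [hupdate r k ω i, if_neg hcond]
  have hAD : ∀ ω, wbar (r + 1) ω - wstar = A ω - η r • D ω := by
    intro ω
    rw [hstep1 ω, hA, hD]
    module
  have hexp : ∀ ω, ‖wbar (r + 1) ω - wstar‖ ^ 2
      = ‖A ω‖ ^ 2 - 2 * η r * ⟪A ω, D ω⟫ + η r ^ 2 * ‖D ω‖ ^ 2 := by
    intro ω
    rw [hAD ω, norm_sub_sq_real, real_inner_smul_right, norm_smul, Real.norm_eq_abs,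
      abs_of_nonneg hηr.le, mul_pow]
    ring
  -- pointwise deterministic inequality
  have hptwise : ∀ ω, ‖A ω‖ ^ 2
      ≤ (1 - μ * η r) * ‖wbar r ω - wstar‖ ^ 2
        - 1 / 2 * η r * (f (wbar r ω) - f wstar)
        + 2 * η r * (β / K) * ∑ k, ‖wbar r ω - w r k ω‖ ^ 2 := by
    intro ω
    have h := det_step hβ hμ hsmooth hstrong wstar hmin hηr (hηsmall r) hK (fun k => w r k ω)
    simp only [hA]
    rw [hwbar r ω, hgbar r ω]
    exact h
  -- assemble
  have hRHSint : Integrable (fun ω => (1 - μ * η r) * ‖wbar r ω - wstar‖ ^ 2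
      - 1 / 2 * η r * (f (wbar r ω) - f wstar)
      + 2 * η r * (β / K) * ∑ k, ‖wbar r ω - w r k ω‖ ^ 2) P := by
    refine Integrable.add (Integrable.sub ((hint₁ r).const_mul _)
      (Integrable.const_mul ?_ _)) (Integrable.const_mul ?_ _)
    · exact (hint₃ r).sub (integrable_const _)
    · exact integrable_finset_sum _ fun k _ => hint₄ r k
  have hs1 : ∫ ω, ‖wbar (r + 1) ω - wstar‖ ^ 2 ∂P
      = ∫ ω, ‖A ω‖ ^ 2 ∂P + η r ^ 2 * ∫ ω, ‖D ω‖ ^ 2 ∂P := by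
    rw [integral_congr_ae (Eventually.of_forall hexp)]
    have i1 : Integrable (fun ω => ‖A ω‖ ^ 2 - 2 * η r * ⟪A ω, D ω⟫) P :=
      hA2int.sub (crossInt.const_mul _)
    have i2 : Integrable (fun ω => η r ^ 2 * ‖D ω‖ ^ 2) P := (hint₂ r).const_mul _
    have i3 : Integrable (fun ω => 2 * η r * ⟪A ω, D ω⟫) P := crossInt.const_mul _
    rw [integral_add i1 i2, integral_sub hA2int i3, integral_const_mul, integral_const_mul,
      ED0]
    ring
  have hs2 : ∫ ω, ‖A ω‖ ^ 2 ∂P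
      ≤ (1 - μ * η r) * ∫ ω, ‖wbar r ω - wstar‖ ^ 2 ∂P
        - 1 / 2 * η r * ∫ ω, (f (wbar r ω) - f wstar) ∂P
        + 2 * η r * (β / K) * ∑ k, ∫ ω, ‖wbar r ω - w r k ω‖ ^ 2 ∂P := by
    refine le_trans (integral_mono hA2int hRHSint hptwise) ?_
    have j1 : Integrable (fun ω => (1 - μ * η r) * ‖wbar r ω - wstar‖ ^ 2) P :=
      (hint₁ r).const_mul _
    have j2 : Integrable (fun ω => 1 / 2 * η r * (f (wbar r ω) - f wstar)) P :=
      ((hint₃ r).sub (integrable_const _)).const_mul _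
    have j3 : Integrable (fun ω => 2 * η r * (β / K) * ∑ k, ‖wbar r ω - w r k ω‖ ^ 2) P :=
      (integrable_finset_sum _ fun k _ => hint₄ r k).const_mul _
    have j12 : Integrable (fun ω => (1 - μ * η r) * ‖wbar r ω - wstar‖ ^ 2
        - 1 / 2 * η r * (f (wbar r ω) - f wstar)) P := j1.sub j2
    rw [integral_add j12 j3, integral_sub j1 j2,
      integral_const_mul, integral_const_mul, integral_const_mul,
      integral_finset_sum _ fun k _ => hint₄ r k]
  have hD2eq : ∫ ω, ‖D ω‖ ^ 2 ∂P = ∫ ω, ‖g r ω - gbar r ω‖ ^ 2 ∂P := rfl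
  rw [hs1, hD2eq]
  have hη2 : 0 ≤ η r ^ 2 := sq_nonneg _
  linarith [hs2]
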